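/- If the continuum hypothesis holds (2^{\aleph_0} = \aleph_1), then there exists a coloring c : \omega_1 \times \omega \to 2 such that for no sets A \subseteq \omega_1 of cardinality \aleph_1 and B \subseteq \omega infinite is c constant on A \times B. -/

import Mathlib

open Cardinal

/-- Given countably many infinite subsets of `ℕ`, there is a 2-coloring of `ℕ`
taking both values on each of them. -/
lemma exists_two_valued (S : ℕ → Set ℕ) (hS : ∀ i, (S i).Infinite) :
    ∃ f : ℕ → Fin 2, ∀ i, (∃ x ∈ S i, f x = 0) ∧ (∃ y ∈ S i, f y = 1) := by
  classical
  have hg : ∀ i n, ∃ m, m ∈ S i ∧ n < m := fun i n => by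
    obtain ⟨m, hm, hnm⟩ := (hS i).exists_gt n
    exact ⟨m, hm, hnm⟩
  choose g hg1 hg2 using hg
  set t : ℕ → ℕ × ℕ := fun i => Nat.rec (g 0 0, g 0 (g 0 0))
    (fun i p => (g (i + 1) p.2, g (i + 1) (g (i + 1) p.2))) i with ht
  set a : ℕ → ℕ := fun i => (t i).1 with ha
  set b : ℕ → ℕ := fun i => (t i).2 with hb
  have hab : ∀ i, a i ∈ S i ∧ b i ∈ S i ∧ a i < b i := by
    intro i
    cases i with
    | zero => exact ⟨hg1 0 0, hg1 0 _, hg2 0 _⟩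
    | succ k => exact ⟨hg1 (k + 1) _, hg1 (k + 1) _, hg2 (k + 1) _⟩
  have hba : ∀ i, b i < a (i + 1) := fun i => hg2 (i + 1) _
  have hbmono : StrictMono b := strictMono_nat_of_lt_succ fun i =>
    (hba i).trans (hab (i + 1)).2.2
  have hne : ∀ i j, b j ≠ a i := by
    intro i j
    rcases lt_or_ge j i with h | h
    · obtain ⟨k, rfl⟩ := Nat.exists_eq_add_of_lt h
      have : b j < a (j + k + 1) :=
        lt_of_le_of_lt (hbmono.monotone (Nat.le_add_right _ _)) (hba (j + k))
      exact this.ne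
    · exact (lt_of_lt_of_le (hab i).2.2 (hbmono.monotone h)).ne'
  refine ⟨fun n => if ∃ j, b j = n then 1 else 0, fun i =>
    ⟨⟨a i, (hab i).1, ?_⟩, ⟨b i, (hab i).2.1, ?_⟩⟩⟩
  · exact if_neg (by push_neg; exact fun j => hne i j)
  · exact if_pos ⟨i, rfl⟩

/-- Erdős–Hajnal–Rado: if CH holds then the strong polarized relation
    `(ω₁, ω) → (ω₁, ω)` fails. -/
theorem stmt_0 (CH : (2 : Cardinal) ^ aleph 0 = aleph 1)
    (X : Type) (hX : #X = aleph 1) :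
    ∃ c : X → ℕ → Fin 2,
      ¬ ∃ (A : Set X) (B : Set ℕ), #A = aleph 1 ∧ B.Infinite ∧
        ∃ i : Fin 2, ∀ a ∈ A, ∀ b ∈ B, c a b = i := by
  classical
  -- a bijection between `X` and `Set ℕ`
  have CH0 : (2 : Cardinal.{0}) ^ aleph 0 = aleph 1 := by
    apply Cardinal.lift_injective
    rw [Cardinal.lift_power, Cardinal.lift_ofNat, Cardinal.lift_aleph, Cardinal.lift_aleph,
      Ordinal.lift_zero, Ordinal.lift_one]
    exact CH
  have hset : #(Set ℕ) = aleph 1 := by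
    rw [Cardinal.mk_set, Cardinal.mk_nat, ← Cardinal.aleph_zero, CH0]
  have e : X ≃ Set ℕ := Classical.choice (Cardinal.eq.mp (hX.trans hset.symm))
  -- a well-order on `X` of type `ω₁`
  obtain ⟨r, wo, hr⟩ := Cardinal.ord_eq X
  -- initial segments are countable
  have hcount : ∀ x : X, {y : X | r y x ∨ y = x}.Countable := by
    intro x
    have h1 : {y : X | r y x}.Countable := by
      rw [Cardinal.countable_iff_lt_aleph_one]
      have h2 := Cardinal.card_typein_lt (r := r) x hr
      rw [hX] at h2
      exact h2
    have : {y : X | r y x ∨ y = x} = {y : X | r y x} ∪ {x} := by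
      ext y; simp [or_comm]
    rw [this]
    exact h1.union (Set.countable_singleton x)
  -- enumerate the initial segment of each point
  have hσ : ∀ x : X, ∃ σ : ℕ → X, {y : X | r y x ∨ y = x} = Set.range σ :=
    fun x => (hcount x).exists_eq_range ⟨x, Or.inr rfl⟩
  choose σ hσ using hσ
  -- countable families of infinite sets to avoid
  set S : X → ℕ → Set ℕ := fun x n =>
    if (e (σ x n)).Infinite then e (σ x n) else Set.univ with hSdef
  have hS : ∀ x i, (S x i).Infinite := by
    intro x i
    by_cases h : (e (σ x i)).Infinite
    · simp only [hSdef, if_pos h]; exact h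
    · simpa [hSdef, h] using Set.infinite_univ
  choose c hc using fun x => exists_two_valued (S x) (hS x)
  refine ⟨c, ?_⟩
  rintro ⟨A, B, hA, hB, i, hmono⟩
  set y : X := e.symm B with hy
  have heyB : e y = B := e.apply_symm_apply B
  -- pick `a ∈ A` beyond `y` in the well-order
  have hAnotsub : ¬ A ⊆ {z : X | r z y ∨ z = y} := by
    intro hsub
    have hAc : A.Countable := (hcount y).mono hsub
    have : #A ≤ ℵ₀ := hAc.le_aleph0
    rw [hA] at this
    exact absurd this Cardinal.aleph0_lt_aleph_one.not_ge
  obtain ⟨a, haA, ha⟩ := Set.not_subset.mp hAnotsub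
  simp only [Set.mem_setOf_eq, not_or] at ha
  -- then `y` is in the initial segment of `a`
  have hy_mem : y ∈ {z : X | r z a ∨ z = a} := by
    rcases trichotomous (r := r) a y with h | h | h
    · exact absurd h ha.1
    · exact absurd h ha.2
    · exact Or.inl h
  rw [hσ a] at hy_mem
  obtain ⟨n, hn⟩ := hy_mem
  have hSan : S a n = B := by
    rw [hSdef]
    simp only [hn, heyB]
    rw [if_pos (heyB ▸ hB)]
  obtain ⟨⟨w0, hw0, hw0v⟩, ⟨w1, hw1, hw1v⟩⟩ := hc a n
  rw [hSan] at hw0 hw1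
  fin_cases i
  · exact absurd (hmono a haA w1 hw1) (by rw [hw1v]; decide)
  · exact absurd (hmono a haA w0 hw0) (by rw [hw0v]; decide)
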